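/- Suppose β ~ N(0, τ²) with τ > 0 and, conditionally on β, b ~ N(β, se²) with se > 0; let b* = τ²·b/(se² + τ²). Then E(|b| − |β|) > E(|β| − |b*|), where the expectations are over the joint distribution of (β, b). -/

import Mathlib

open MeasureTheory ProbabilityTheory

section MyAux
open Real Set Filter
open scoped ENNReal NNReal

lemma my_integral_Ioi_mul_exp {b : ℝ} (hb : 0 < b) :
    ∫ x in Ioi (0:ℝ), x * Real.exp (-b * x ^ 2) = (2*b)⁻¹ := by
  have hb' : b ≠ 0 := hb.ne'
  have A : ∀ x : ℝ, HasDerivAt (fun x => -(2 * b)⁻¹ * Real.exp (-b * x ^ 2))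
      (x * Real.exp (-b * x ^ 2)) x := by
    intro x
    convert ((hasDerivAt_pow 2 x).const_mul (-b)).exp.const_mul (-(2 * b)⁻¹) using 1
    · rfl
    · rfl
    field_simp
    ring
  have B : Tendsto (fun y : ℝ ↦ -(2 * b)⁻¹ * Real.exp (-b * y ^ 2))
      atTop (nhds (-(2 * b)⁻¹ * 0)) := by
    refine Tendsto.const_mul _ ?_
    refine Real.tendsto_exp_atBot.comp ?_
    exact (tendsto_pow_atTop two_ne_zero).const_mul_atTop_of_neg (neg_lt_zero.2 hb)
  have := integral_Ioi_of_hasDerivAt_of_tendsto' (a := 0) (fun x _ => A x)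
    (integrable_mul_exp_neg_mul_sq hb).integrableOn B
  simpa using this

lemma my_integral_abs_mul_exp {b : ℝ} (hb : 0 < b) :
    ∫ x : ℝ, |x| * Real.exp (-b * x ^ 2) = b⁻¹ := by
  have : ∀ x : ℝ, |x| * Real.exp (-b * x ^ 2) = |x| * Real.exp (-b * |x| ^ 2) := by
    intro x; rw [sq_abs]
  rw [funext this]
  rw [integral_comp_abs (f := fun x => x * Real.exp (-b * x ^ 2)), my_integral_Ioi_mul_exp hb]
  field_simp

lemma my_gaussian_withDensity {v : ℝ≥0} (hv : v ≠ 0) (μ : ℝ) :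
    gaussianReal μ v
      = volume.withDensity (fun x => ((gaussianPDFReal μ v x).toNNReal : ℝ≥0∞)) := by
  rw [gaussianReal_of_var_ne_zero _ hv]
  rfl

lemma my_integral_gaussianReal {v : ℝ≥0} (hv : v ≠ 0) (μ : ℝ) (g : ℝ → ℝ) :
    ∫ x, g x ∂(gaussianReal μ v) = ∫ x, gaussianPDFReal μ v x * g x := by
  rw [my_gaussian_withDensity hv, integral_withDensity_eq_integral_smul
    (measurable_gaussianPDFReal μ v).real_toNNReal]
  congr 1 with x
  rw [NNReal.smul_def, Real.coe_toNNReal _ (gaussianPDFReal_nonneg μ v x)]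
  rfl

lemma my_pdf_eq {v : ℝ≥0} (hv : v ≠ 0) (x : ℝ) :
    gaussianPDFReal 0 v x = (Real.sqrt (2 * π * v))⁻¹ * Real.exp (-(2*(v:ℝ))⁻¹ * x ^ 2) := by
  rw [gaussianPDFReal]
  congr 1
  rw [sub_zero]
  congr 1
  have hv' : (0:ℝ) < v := by exact_mod_cast hv.bot_lt
  field_simp

lemma my_pos_of_ne {v : ℝ≥0} (hv : v ≠ 0) : (0:ℝ) < v := by
  exact_mod_cast hv.bot_lt

lemma my_integrable_abs_mul_pdf {v : ℝ≥0} (hv : v ≠ 0) :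
    Integrable (fun x : ℝ => gaussianPDFReal 0 v x * |x|) := by
  have hv' : (0:ℝ) < v := my_pos_of_ne hv
  have hb : (0:ℝ) < (2*(v:ℝ))⁻¹ := by positivity
  have h := ((integrable_mul_exp_neg_mul_sq hb).abs.const_mul (Real.sqrt (2 * π * v))⁻¹)
  refine h.congr (Filter.Eventually.of_forall fun x => ?_)
  simp only [my_pdf_eq hv, abs_mul, abs_of_nonneg (Real.exp_pos _).le]
  ring

lemma my_integrable_abs_gaussianReal {v : ℝ≥0} (hv : v ≠ 0) :
    Integrable (fun x : ℝ => |x|) (gaussianReal 0 v) := by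
  rw [my_gaussian_withDensity hv, integrable_withDensity_iff
    ((measurable_gaussianPDFReal 0 v).real_toNNReal.coe_nnreal_ennreal)
    (Filter.Eventually.of_forall fun x => ENNReal.coe_lt_top)]
  refine (my_integrable_abs_mul_pdf hv).congr (Filter.Eventually.of_forall fun x => ?_)
  simp only [ENNReal.coe_toReal, Real.coe_toNNReal _ (gaussianPDFReal_nonneg 0 v x)]
  ring

lemma my_integral_abs_gaussianReal {v : ℝ≥0} (hv : v ≠ 0) :
    ∫ x, |x| ∂(gaussianReal 0 v) = Real.sqrt (2*v/π) := by
  have hv' : (0:ℝ) < v := my_pos_of_ne hv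
  have hb : (0:ℝ) < (2*(v:ℝ))⁻¹ := by positivity
  rw [my_integral_gaussianReal hv 0 (fun x => |x|)]
  have : (fun x : ℝ => gaussianPDFReal 0 v x * |x|)
      = fun x => (Real.sqrt (2 * π * v))⁻¹ * (|x| * Real.exp (-(2*(v:ℝ))⁻¹ * x ^ 2)) := by
    ext x; rw [my_pdf_eq hv]; ring
  rw [this, integral_const_mul, my_integral_abs_mul_exp hb, inv_inv]
  have hπ : (0:ℝ) < π := Real.pi_pos
  have h2v : (0:ℝ) ≤ 2*(v:ℝ) := by positivity
  rw [← Real.sqrt_inv, ← Real.sqrt_sq h2v, ← Real.sqrt_mul (by positivity)]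
  congr 1
  field_simp
  rw [← mul_pow, Real.sqrt_sq h2v]

lemma my_conv_pdf {v1 v2 : ℝ≥0} (h1 : v1 ≠ 0) (h2 : v2 ≠ 0) (u : ℝ) :
    ∫ x, gaussianPDFReal 0 v1 x * gaussianPDFReal 0 v2 (u - x)
      = gaussianPDFReal 0 (v1+v2) u := by
  have ha : (0:ℝ) < v1 := my_pos_of_ne h1
  have hb : (0:ℝ) < v2 := my_pos_of_ne h2
  have hπ : (0:ℝ) < π := Real.pi_pos
  set a : ℝ := (v1:ℝ) with ha'
  set b : ℝ := (v2:ℝ) with hb'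
  have hV : (0:ℝ) < a + b := by linarith
  set c : ℝ := (a+b)/(2*a*b) with hc'
  have hc : 0 < c := by positivity
  set m : ℝ := a*u/(a+b) with hm'
  set C : ℝ := (Real.sqrt (2*π*a))⁻¹ * (Real.sqrt (2*π*b))⁻¹ * Real.exp (-u^2/(2*(a+b)))
    with hC'
  have step1 : ∀ x : ℝ, gaussianPDFReal 0 v1 x * gaussianPDFReal 0 v2 (u - x)
      = C * Real.exp (-c * (x - m)^2) := by
    intro x
    simp only [gaussianPDFReal, sub_zero, hC']
    have hexp : -x ^ 2 / (2 * a) + -(u - x) ^ 2 / (2 * b)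
        = -u ^ 2 / (2 * (a + b)) + -c * (x - m) ^ 2 := by
      rw [hc', hm']
      field_simp
      ring
    rw [ha', hb'] at hexp ⊢
    calc (√(2 * π * a))⁻¹ * rexp (-x ^ 2 / (2 * a)) * ((√(2 * π * b))⁻¹ * rexp (-(u - x) ^ 2 / (2 * b)))
        = (√(2 * π * a))⁻¹ * (√(2 * π * b))⁻¹ * rexp (-x ^ 2 / (2 * a) + -(u - x) ^ 2 / (2 * b)) := by
          rw [Real.exp_add]; ring
      _ = (√(2 * π * a))⁻¹ * (√(2 * π * b))⁻¹ * rexp (-u ^ 2 / (2 * (a + b)) + -c * (x - m) ^ 2) := by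
          rw [hexp]
      _ = (√(2 * π * a))⁻¹ * (√(2 * π * b))⁻¹ * rexp (-u ^ 2 / (2 * (a + b))) * rexp (-c * (x - m) ^ 2) := by
          rw [Real.exp_add]; ring
  rw [funext step1, integral_const_mul,
    integral_sub_right_eq_self (fun x => Real.exp (-c * x^2)) m, integral_gaussian]
  -- now C * √(π/c) = pdf of sum
  simp only [gaussianPDFReal, sub_zero, hC']
  have hcoe : ((v1 + v2 : ℝ≥0) : ℝ) = a + b := by push_cast; rfl
  rw [hcoe]
  have hsq : (Real.sqrt (2*π*a))⁻¹ * (Real.sqrt (2*π*b))⁻¹ * Real.sqrt (π/c)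
      = (Real.sqrt (2*π*(a+b)))⁻¹ := by
    rw [← Real.sqrt_inv, ← Real.sqrt_inv, ← Real.sqrt_inv,
      ← Real.sqrt_mul (by positivity), ← Real.sqrt_mul (by positivity)]
    congr 1
    rw [hc']
    field_simp
  calc (√(2 * π * a))⁻¹ * (√(2 * π * b))⁻¹ * rexp (-u ^ 2 / (2 * (a + b))) * √(π / c)
      = ((√(2*π*a))⁻¹ * (√(2*π*b))⁻¹ * √(π/c)) * rexp (-u ^ 2 / (2 * (a + b))) := by ring
    _ = (√(2 * π * (a+b)))⁻¹ * rexp (-u ^ 2 / (2 * (a + b))) := by rw [hsq]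

lemma my_pdf_le {v : ℝ≥0} (μ t : ℝ) :
    gaussianPDFReal μ v t ≤ (Real.sqrt (2 * π * v))⁻¹ := by
  rw [gaussianPDFReal]
  have h1 : Real.exp (-(t - μ)^2 / (2 * v)) ≤ 1 := by
    apply Real.exp_le_one_iff.mpr
    rcases eq_or_ne v 0 with h | h
    · simp [h]
    · have : (0:ℝ) < v := my_pos_of_ne h
      have : (0:ℝ) < 2 * v := by linarith
      exact div_nonpos_of_nonpos_of_nonneg (neg_nonpos.mpr (sq_nonneg _)) this.le
  calc (Real.sqrt (2 * π * v))⁻¹ * Real.exp (-(t - μ)^2 / (2 * v))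
      ≤ (Real.sqrt (2 * π * v))⁻¹ * 1 := by
        apply mul_le_mul_of_nonneg_left h1
        positivity
    _ = (Real.sqrt (2 * π * v))⁻¹ := mul_one _

lemma my_integrable_conv {v1 v2 : ℝ≥0} (u : ℝ) :
    Integrable (fun x : ℝ => gaussianPDFReal 0 v1 x * gaussianPDFReal 0 v2 (u - x)) := by
  refine Integrable.mono' ((integrable_gaussianPDFReal 0 v1).const_mul
    (Real.sqrt (2 * π * v2))⁻¹) ?_ (Filter.Eventually.of_forall fun x => ?_)
  · exact ((measurable_gaussianPDFReal 0 v1).mul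
      ((measurable_gaussianPDFReal 0 v2).comp (measurable_const.sub measurable_id))).aestronglyMeasurable
  · rw [Real.norm_eq_abs, abs_of_nonneg (mul_nonneg (gaussianPDFReal_nonneg _ _ _)
      (gaussianPDFReal_nonneg _ _ _))]
    calc gaussianPDFReal 0 v1 x * gaussianPDFReal 0 v2 (u - x)
        ≤ gaussianPDFReal 0 v1 x * (Real.sqrt (2 * π * v2))⁻¹ :=
          mul_le_mul_of_nonneg_left (my_pdf_le 0 (u-x)) (gaussianPDFReal_nonneg _ _ _)
      _ = (Real.sqrt (2 * π * v2))⁻¹ * gaussianPDFReal 0 v1 x := mul_comm _ _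

lemma my_conv_pdf_ennreal {v1 v2 : ℝ≥0} (h1 : v1 ≠ 0) (h2 : v2 ≠ 0) (u : ℝ) :
    ∫⁻ x, gaussianPDF 0 v1 x * gaussianPDF 0 v2 (u - x) = gaussianPDF 0 (v1+v2) u := by
  simp only [gaussianPDF]
  have : ∀ x : ℝ, ENNReal.ofReal (gaussianPDFReal 0 v1 x)
        * ENNReal.ofReal (gaussianPDFReal 0 v2 (u - x))
      = ENNReal.ofReal (gaussianPDFReal 0 v1 x * gaussianPDFReal 0 v2 (u - x)) := fun x =>
    (ENNReal.ofReal_mul (gaussianPDFReal_nonneg _ _ _)).symm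
  rw [lintegral_congr this,
    ← ofReal_integral_eq_lintegral_ofReal (my_integrable_conv u)
      (Filter.Eventually.of_forall fun x => mul_nonneg (gaussianPDFReal_nonneg _ _ _)
        (gaussianPDFReal_nonneg _ _ _)),
    my_conv_pdf h1 h2 u]

lemma my_lintegral_abs_add {v1 v2 : ℝ≥0} (h1 : v1 ≠ 0) (h2 : v2 ≠ 0) :
    ∫⁻ p : ℝ × ℝ, ENNReal.ofReal |p.1 + p.2| ∂((gaussianReal 0 v1).prod (gaussianReal 0 v2))
      = ∫⁻ u, ENNReal.ofReal |u| ∂(gaussianReal 0 (v1+v2)) := by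
  have h12 : v1 + v2 ≠ 0 := by simp [h1, h2]
  have habs : Measurable fun u : ℝ => ENNReal.ofReal |u| :=
    continuous_abs.measurable.ennreal_ofReal
  have hg1 := measurable_gaussianPDF 0 v1
  have hg2 := measurable_gaussianPDF 0 v2
  have hF : Measurable fun p : ℝ × ℝ => ENNReal.ofReal |p.1 + p.2| :=
    ((continuous_fst.add continuous_snd).abs.measurable).ennreal_ofReal
  have hmeas2 : ∀ x : ℝ, Measurable fun u : ℝ => gaussianPDF 0 v2 (u - x) * ENNReal.ofReal |u| :=
    fun x => ((hg2.comp (measurable_id.sub measurable_const)).mul habs)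
  have hmeasU : Measurable (Function.uncurry fun x u : ℝ =>
      gaussianPDF 0 v1 x * (gaussianPDF 0 v2 (u - x) * ENNReal.ofReal |u|)) :=
    (hg1.comp measurable_fst).mul
      (((hg2.comp (measurable_snd.sub measurable_fst))).mul
        ((continuous_abs.measurable.comp measurable_snd).ennreal_ofReal))
  have hmeasU2 : Measurable (Function.uncurry fun x u : ℝ =>
      gaussianPDF 0 v2 (u - x) * ENNReal.ofReal |u|) :=
    ((hg2.comp (measurable_snd.sub measurable_fst))).mul
        ((continuous_abs.measurable.comp measurable_snd).ennreal_ofReal)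
  calc ∫⁻ p : ℝ × ℝ, ENNReal.ofReal |p.1 + p.2| ∂((gaussianReal 0 v1).prod (gaussianReal 0 v2))
      = ∫⁻ x, ∫⁻ y, ENNReal.ofReal |x + y| ∂(gaussianReal 0 v2) ∂(gaussianReal 0 v1) :=
        lintegral_prod _ hF.aemeasurable
    _ = ∫⁻ x, ∫⁻ u, gaussianPDF 0 v2 (u - x) * ENNReal.ofReal |u| ∂(volume)
          ∂(gaussianReal 0 v1) := by
        refine lintegral_congr fun x => ?_
        rw [gaussianReal_of_var_ne_zero 0 h2, lintegral_withDensity_eq_lintegral_mul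
          (f := gaussianPDF 0 v2) (g := fun y => ENNReal.ofReal |x + y|) _ hg2 (by fun_prop)]
        rw [← lintegral_add_right_eq_self (fun u => gaussianPDF 0 v2 (u - x)
          * ENNReal.ofReal |u|) x]
        refine lintegral_congr fun y => ?_
        simp only [add_sub_cancel_right, Pi.mul_apply]
        rw [add_comm y x]
    _ = ∫⁻ x, gaussianPDF 0 v1 x
          * ∫⁻ u, gaussianPDF 0 v2 (u - x) * ENNReal.ofReal |u| ∂(volume) ∂(volume) := by
        rw [gaussianReal_of_var_ne_zero 0 h1, lintegral_withDensity_eq_lintegral_mul _ hg1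
          (Measurable.lintegral_prod_right (f := fun x u => gaussianPDF 0 v2 (u - x)
            * ENNReal.ofReal |u|) hmeasU2)]
        rfl
    _ = ∫⁻ x, ∫⁻ u, gaussianPDF 0 v1 x
          * (gaussianPDF 0 v2 (u - x) * ENNReal.ofReal |u|) ∂(volume) ∂(volume) :=
        lintegral_congr fun x => (lintegral_const_mul _ (hmeas2 x)).symm
    _ = ∫⁻ u, ∫⁻ x, gaussianPDF 0 v1 x
          * (gaussianPDF 0 v2 (u - x) * ENNReal.ofReal |u|) ∂(volume) ∂(volume) :=
        lintegral_lintegral_swap hmeasU.aemeasurable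
    _ = ∫⁻ u, ENNReal.ofReal |u| * ∫⁻ x, gaussianPDF 0 v1 x
          * gaussianPDF 0 v2 (u - x) ∂(volume) ∂(volume) := by
        refine lintegral_congr fun u => ?_
        rw [← lintegral_const_mul (f := fun x => gaussianPDF 0 v1 x * gaussianPDF 0 v2 (u - x))
          (ENNReal.ofReal |u|) (by fun_prop)]
        refine lintegral_congr fun x => ?_
        ring
    _ = ∫⁻ u, ENNReal.ofReal |u| * gaussianPDF 0 (v1+v2) u ∂(volume) := by
        refine lintegral_congr fun u => ?_
        rw [my_conv_pdf_ennreal h1 h2 u]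
    _ = ∫⁻ u, ENNReal.ofReal |u| ∂(gaussianReal 0 (v1+v2)) := by
        rw [gaussianReal_of_var_ne_zero 0 h12, lintegral_withDensity_eq_lintegral_mul _
          (measurable_gaussianPDF 0 (v1+v2)) habs]
        refine lintegral_congr fun u => ?_
        simp only [Pi.mul_apply]
        ring

lemma my_integral_of_lintegral {α : Type*} [MeasurableSpace α] (μ : Measure α) (f : α → ℝ)
    (hf : AEStronglyMeasurable f μ) (hnn : ∀ x, 0 ≤ f x) {r : ℝ} (hr : 0 ≤ r)
    (h : ∫⁻ x, ENNReal.ofReal (f x) ∂μ = ENNReal.ofReal r) :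
    Integrable f μ ∧ ∫ x, f x ∂μ = r := by
  constructor
  · refine ⟨hf, ?_⟩
    rw [HasFiniteIntegral]
    have : ∀ x, ‖f x‖ₑ = ENNReal.ofReal (f x) := by
      intro x
      rw [← ofReal_norm, Real.norm_eq_abs, abs_of_nonneg (hnn x)]
    rw [lintegral_congr this, h]
    exact ENNReal.ofReal_lt_top
  · rw [integral_eq_lintegral_of_nonneg_ae (Filter.Eventually.of_forall hnn) hf, h,
      ENNReal.toReal_ofReal hr]

lemma my_lintegral_abs_gaussianReal {v : ℝ≥0} (hv : v ≠ 0) :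
    ∫⁻ x, ENNReal.ofReal |x| ∂(gaussianReal 0 v) = ENNReal.ofReal (Real.sqrt (2*v/π)) := by
  rw [← ofReal_integral_eq_lintegral_ofReal (my_integrable_abs_gaussianReal hv)
    (Filter.Eventually.of_forall fun x => abs_nonneg x), my_integral_abs_gaussianReal hv]

end MyAux

open scoped ENNReal NNReal Real in
/-- Hierarchical normal model: `β ~ N(0, τ²)` and, given `β`, `b = β + ε ~ N(β, se²)`
with `ε ~ N(0, se²)` independent of `β`; let `b* = τ²·b/(se² + τ²)`.  Then
`E(|b| − |β|) > E(|β| − |b*|)`. -/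
theorem mean_bias_of_b_gt_mean_bias_of_bstar {Ω : Type*} [MeasurableSpace Ω]
    (P : Measure Ω) [IsProbabilityMeasure P] (β ε b bstar : Ω → ℝ) (τ se : ℝ)
    (hτ : 0 < τ) (hse : 0 < se)
    (hβ : Measure.map β P = gaussianReal 0 (Real.toNNReal (τ ^ 2)))
    (hε : Measure.map ε P = gaussianReal 0 (Real.toNNReal (se ^ 2)))
    (hind : IndepFun β ε P)
    (hb : ∀ ω, b ω = β ω + ε ω)
    (hbstar : ∀ ω, bstar ω = τ ^ 2 * b ω / (se ^ 2 + τ ^ 2)) :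
    (∫ ω, (|β ω| - |bstar ω|) ∂P) < ∫ ω, (|b ω| - |β ω|) ∂P := by
  have hπ : (0:ℝ) < π := Real.pi_pos
  set v1 : ℝ≥0 := Real.toNNReal (τ ^ 2) with hv1'
  set v2 : ℝ≥0 := Real.toNNReal (se ^ 2) with hv2'
  have hv1 : v1 ≠ 0 := by
    simp only [hv1', ne_eq, Real.toNNReal_eq_zero, not_le]
    positivity
  have hv2 : v2 ≠ 0 := by
    simp only [hv2', ne_eq, Real.toNNReal_eq_zero, not_le]
    positivity
  have h12 : v1 + v2 ≠ 0 := by simp [hv1, hv2]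
  have hc1 : ((v1:ℝ)) = τ ^ 2 := Real.coe_toNNReal _ (sq_nonneg τ)
  have hc2 : ((v2:ℝ)) = se ^ 2 := Real.coe_toNNReal _ (sq_nonneg se)
  have hc12 : (((v1+v2:ℝ≥0)):ℝ) = τ ^ 2 + se ^ 2 := by push_cast [hc1, hc2]; ring
  have hβm : AEMeasurable β P := aemeasurable_of_map_neZero (by rw [hβ]; infer_instance)
  have hεm : AEMeasurable ε P := aemeasurable_of_map_neZero (by rw [hε]; infer_instance)
  have hbm : AEMeasurable b P :=
    (hβm.add hεm).congr (Filter.Eventually.of_forall fun ω => (hb ω).symm)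
  -- value and integrability for β
  have hAi : Integrable (fun ω => |β ω|) P := by
    have : Integrable (fun x : ℝ => |x|) (P.map β) := by
      rw [hβ]; exact my_integrable_abs_gaussianReal hv1
    exact (integrable_map_measure continuous_abs.aestronglyMeasurable hβm).mp this
  have hA : ∫ ω, |β ω| ∂P = Real.sqrt (2 * τ ^ 2 / π) := by
    have h := integral_map (φ := β) hβm (f := fun x => |x|)
      continuous_abs.aestronglyMeasurable
    rw [hβ, my_integral_abs_gaussianReal hv1, hc1] at h
    exact h.symm
  -- value and integrability for b
  have hmap := (indepFun_iff_map_prod_eq_prod_map_map hβm hεm).mp hind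
  rw [hβ, hε] at hmap
  have hCl : ∫⁻ ω, ENNReal.ofReal |b ω| ∂P
      = ENNReal.ofReal (Real.sqrt (2 * (τ ^ 2 + se ^ 2) / π)) := by
    have hF : Measurable fun p : ℝ × ℝ => ENNReal.ofReal |p.1 + p.2| :=
      ((continuous_fst.add continuous_snd).abs.measurable).ennreal_ofReal
    calc ∫⁻ ω, ENNReal.ofReal |b ω| ∂P
        = ∫⁻ ω, ENNReal.ofReal |β ω + ε ω| ∂P := lintegral_congr fun ω => by rw [hb ω]
      _ = ∫⁻ p : ℝ × ℝ, ENNReal.ofReal |p.1 + p.2|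
            ∂(P.map (fun ω => (β ω, ε ω))) := by
          rw [lintegral_map' (hmap ▸ hF.aemeasurable) (hβm.prodMk hεm)]
      _ = ∫⁻ p : ℝ × ℝ, ENNReal.ofReal |p.1 + p.2|
            ∂((gaussianReal 0 v1).prod (gaussianReal 0 v2)) := by rw [hmap]
      _ = ∫⁻ u, ENNReal.ofReal |u| ∂(gaussianReal 0 (v1+v2)) :=
          my_lintegral_abs_add hv1 hv2
      _ = ENNReal.ofReal (Real.sqrt (2 * (τ ^ 2 + se ^ 2) / π)) := by
          rw [my_lintegral_abs_gaussianReal h12, hc12]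
  obtain ⟨hCi, hC⟩ := my_integral_of_lintegral P (fun ω => |b ω|)
    (continuous_abs.measurable.comp_aemeasurable hbm).aestronglyMeasurable
    (fun ω => abs_nonneg _) (Real.sqrt_nonneg _) hCl
  -- bstar
  have hs2 : (0:ℝ) < se ^ 2 + τ ^ 2 := by positivity
  have hBeq : ∀ ω, |bstar ω| = τ ^ 2 / (se ^ 2 + τ ^ 2) * |b ω| := by
    intro ω
    rw [hbstar ω, abs_div, abs_of_pos hs2, abs_mul, abs_of_pos (by positivity : (0:ℝ) < τ ^ 2)]
    ring
  have hBi : Integrable (fun ω => |bstar ω|) P := by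
    refine ((hCi.const_mul (τ ^ 2 / (se ^ 2 + τ ^ 2))).congr
      (Filter.Eventually.of_forall fun ω => ?_))
    exact (hBeq ω).symm
  have hB : ∫ ω, |bstar ω| ∂P
      = τ ^ 2 / (se ^ 2 + τ ^ 2) * Real.sqrt (2 * (τ ^ 2 + se ^ 2) / π) := by
    calc ∫ ω, |bstar ω| ∂P = ∫ ω, τ ^ 2 / (se ^ 2 + τ ^ 2) * |b ω| ∂P :=
          integral_congr_ae (Filter.Eventually.of_forall fun ω => hBeq ω)
      _ = τ ^ 2 / (se ^ 2 + τ ^ 2) * ∫ ω, |b ω| ∂P := integral_const_mul _ _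
      _ = _ := by rw [hC]
  rw [integral_sub hAi hBi, integral_sub hCi hAi, hA, hB, hC]
  -- numeric inequality
  set X : ℝ := Real.sqrt (2 * τ ^ 2 / π) with hX'
  set Y : ℝ := Real.sqrt (2 * (τ ^ 2 + se ^ 2) / π) with hY'
  have hY0 : 0 < Y := Real.sqrt_pos.mpr (by positivity)
  have hXY : X < Y := by
    apply Real.sqrt_lt_sqrt (by positivity)
    have : (0:ℝ) < se ^ 2 := by positivity
    rw [div_lt_div_iff_of_pos_right hπ]
    nlinarith
  have hX2 : X ^ 2 = 2 * τ ^ 2 / π := Real.sq_sqrt (by positivity)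
  have hY2 : Y ^ 2 = 2 * (τ ^ 2 + se ^ 2) / π := Real.sq_sqrt (by positivity)
  have hfrac : τ ^ 2 / (se ^ 2 + τ ^ 2) = X ^ 2 / Y ^ 2 := by
    rw [hX2, hY2]
    field_simp
    ring
  rw [hfrac]
  have hY2' : X ^ 2 / Y ^ 2 * Y = X ^ 2 / Y := by
    field_simp
  rw [hY2']
  have ht : X ^ 2 / Y * Y = X ^ 2 := div_mul_cancel₀ _ hY0.ne'
  nlinarith [mul_pos (sub_pos.mpr hXY) (sub_pos.mpr hXY), ht, hY0]
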